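/- Let R be a commutative ring, let p₁ ∈ R be a non zero-divisor, and Q₁ ∈ R[y]. Set F(x,y) = p₁·x + Q₁(y). Then F is a coordinate of R[x,y] if and only if the image of Q₁(y) in (R/p₁R)[y] is a coordinate of (R/p₁R)[y]. -/

import Mathlib

namespace RSaux
open Polynomial

variable {S : Type*} [CommRing S]

lemma comp_sub_mem {J K : Ideal S} {g s : S[X]}
    (hg : g ∈ J.map (C : S →+* S[X])) (hs : s ∈ K.map (C : S →+* S[X])) :
    g.comp (X + s) - g ∈ (J * K).map (C : S →+* S[X]) := by
  rw [Ideal.map_mul]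
  have hrepr : ∑ i ∈ g.support, Polynomial.C (g.coeff i) * ((X + s) ^ i - X ^ i)
      = g.comp (X + s) - g := by
    simp_rw [mul_sub, Finset.sum_sub_distrib]
    congr 1
    · rw [comp_eq_sum_left]; rfl
    · exact (as_sum_support_C_mul_X_pow g).symm
  rw [← hrepr]
  refine Ideal.sum_mem _ (fun i _ => ?_)
  refine Ideal.mul_mem_mul ?_ ?_
  · exact Ideal.mem_map_of_mem _ (Ideal.mem_map_C_iff.mp hg i)
  · obtain ⟨q, hq⟩ := sub_dvd_pow_sub_pow (X + s) X i
    rw [add_sub_cancel_left] at hq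
    rw [hq]
    exact Ideal.mul_mem_right _ _ hs

lemma aeval_X_add_bijective {s : S[X]} (hs : ∀ n, IsNilpotent (s.coeff n)) :
    Function.Bijective (aeval (X + s) : S[X] →ₐ[S] S[X]) := by
  set I : Ideal S := Ideal.span (s.coeffs : Set S) with hIdef
  have hle : I ≤ (0 : Ideal S).radical := by
    rw [Ideal.span_le]
    intro c hc
    obtain ⟨n, -, rfl⟩ := Polynomial.mem_coeffs_iff.mp hc
    exact hs n
  obtain ⟨K, hK⟩ := Ideal.exists_pow_le_of_le_radical_of_fg hle ⟨s.coeffs, rfl⟩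
  have hsI : s ∈ I.map (C : S →+* S[X]) := by
    rw [Ideal.mem_map_C_iff]
    intro n
    by_cases h : s.coeff n = 0
    · simp [h]
    · exact Ideal.subset_span (coeff_mem_coeffs h)
  have haeval : ∀ g : S[X], aeval (X + s) g = g.comp (X + s) := by
    intro g
    rw [aeval_def, Polynomial.algebraMap_eq]; rfl
  -- injectivity
  have hinj : ∀ (k : ℕ) (g : S[X]), g.comp (X + s) = 0 → g ∈ (I ^ k).map (C : S →+* S[X]) := by
    intro k
    induction k with
    | zero => intro g _; simp [Ideal.map_top]
    | succ k ih =>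
      intro g hg
      have := comp_sub_mem (ih g hg) hsI
      rw [hg, zero_sub, ← pow_succ] at this
      simpa using (Ideal.map (C : S →+* S[X]) (I ^ (k+1))).neg_mem this
  -- surjectivity: find h with h.comp (X+s) = X
  have hsur : ∀ k : ℕ, ∃ h : S[X], X - h.comp (X + s) ∈ (I ^ k).map (C : S →+* S[X]) := by
    intro k
    induction k with
    | zero => exact ⟨X, by simp [Ideal.map_top]⟩
    | succ k ih =>
      obtain ⟨h, hh⟩ := ih
      refine ⟨h + (X - h.comp (X + s)), ?_⟩
      have := comp_sub_mem hh hsI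
      rw [← pow_succ] at this
      have heq : X - (h + (X - h.comp (X + s))).comp (X + s)
          = -(((X : S[X]) - h.comp (X + s)).comp (X + s) - (X - h.comp (X + s))) := by
        rw [add_comp]
        ring
      rw [heq]
      exact (Ideal.map (C : S →+* S[X]) (I ^ (k+1))).neg_mem this
  have hbot : (I ^ K).map (C : S →+* S[X]) = ⊥ := by
    rw [le_bot_iff.mp hK, Ideal.map_bot]
  constructor
  · intro g₁ g₂ h12
    have : (g₁ - g₂).comp (X + s) = 0 := by
      rw [sub_comp, ← haeval, ← haeval, h12, sub_self]
    have := hinj K _ this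
    rw [hbot, Ideal.mem_bot, sub_eq_zero] at this
    exact this
  · obtain ⟨h, hh⟩ := hsur K
    rw [hbot, Ideal.mem_bot, sub_eq_zero] at hh
    rw [← AlgHom.range_eq_top]
    rw [eq_top_iff, ← Polynomial.adjoin_X]
    refine Algebra.adjoin_le ?_
    rw [Set.singleton_subset_iff]
    exact ⟨h, show (aeval (X + s)) h = X from (haeval h).trans hh.symm⟩

lemma affine_equiv (u : Sˣ) (c : S) :
    ∃ e : S[X] ≃ₐ[S] S[X], e X = C (u : S) * X + C c := by
  refine ⟨AlgEquiv.ofAlgHom (aeval (C (u : S) * X + C c))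
    (aeval (C ((u⁻¹ : Sˣ) : S) * X - C (((u⁻¹ : Sˣ) : S) * c))) ?_ ?_, ?_⟩
  · apply Polynomial.algHom_ext
    simp only [AlgHom.coe_comp, Function.comp_apply, aeval_X, map_sub, map_add, map_mul,
      aeval_C, AlgHom.id_apply]
    rw [Polynomial.algebraMap_eq, mul_add, ← mul_assoc, ← C_mul,
      mul_comm ((u⁻¹ : Sˣ) : S) (u : S), Units.mul_inv, ← C_mul]
    simp
  · apply Polynomial.algHom_ext
    simp only [AlgHom.coe_comp, Function.comp_apply, aeval_X, map_sub, map_add, map_mul,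
      aeval_C, AlgHom.id_apply]
    rw [Polynomial.algebraMap_eq, mul_sub, ← mul_assoc, ← mul_assoc, ← C_mul, Units.mul_inv]
    simp
  · simp

lemma exists_algEquiv_aeval {w : S[X]} (h1 : IsUnit (w.coeff 1))
    (h2 : ∀ j, 2 ≤ j → IsNilpotent (w.coeff j)) :
    ∃ e : S[X] ≃ₐ[S] S[X], ∀ g, e g = aeval w g := by
  obtain ⟨u, hu⟩ := h1
  set s : S[X] := C ((u⁻¹ : Sˣ) : S) * (w - C (w.coeff 0) - C (w.coeff 1) * X) with hsdef
  have hs : ∀ n, IsNilpotent (s.coeff n) := by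
    intro n
    have hcs : s.coeff n = ((u⁻¹ : Sˣ) : S) * (w - C (w.coeff 0) - C (w.coeff 1) * X).coeff n := by
      rw [hsdef, coeff_C_mul]
    rw [hcs]
    match n with
    | 0 => simp
    | 1 => simp [coeff_C]
    | (j+2) =>
      have : (w - C (w.coeff 0) - C (w.coeff 1) * X).coeff (j+2) = w.coeff (j+2) := by
        simp [coeff_C, coeff_C_mul, coeff_X]
      rw [this]
      obtain ⟨m, hm⟩ := h2 (j+2) (by omega)
      exact ⟨m, by rw [mul_pow, hm, mul_zero]⟩
  obtain ⟨e₀, he₀⟩ := affine_equiv u (w.coeff 0)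
  have hw : aeval (X + s) (e₀ X) = w := by
    rw [he₀]
    simp only [map_add, map_mul, aeval_C, aeval_X, Polynomial.algebraMap_eq]
    rw [hsdef, mul_add, ← mul_assoc, ← C_mul, Units.mul_inv, C_1, one_mul, hu]
    ring
  have hcomp : (aeval w : S[X] →ₐ[S] S[X])
      = (aeval (X + s) : S[X] →ₐ[S] S[X]).comp e₀.toAlgHom := by
    apply Polynomial.algHom_ext
    simp only [aeval_X, AlgHom.coe_comp, Function.comp_apply, AlgEquiv.toAlgHom_eq_coe,
      AlgHom.coe_coe]
    exact hw.symm
  have hbij : Function.Bijective (aeval w : S[X] →ₐ[S] S[X]) := by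
    rw [hcomp]
    simp only [AlgHom.coe_comp, AlgEquiv.toAlgHom_eq_coe, AlgHom.coe_coe]
    exact Function.Bijective.comp (aeval_X_add_bijective hs) e₀.bijective
  exact ⟨AlgEquiv.ofBijective _ hbij, fun g => rfl⟩

lemma unit_nilpotent_of_comp_eq_X {h w : S[X]} (hcomp : h.comp w = X) :
    IsUnit (w.coeff 1) ∧ ∀ j, 2 ≤ j → IsNilpotent (w.coeff j) := by
  have key : ∀ (P : Ideal S), P.IsPrime → (w.coeff 1 ∉ P ∧ ∀ j, 2 ≤ j → w.coeff j ∈ P) := by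
    intro P hP
    set mkp := Ideal.Quotient.mk P with hmkp
    have hmap : (h.map mkp).comp (w.map mkp) = X := by
      rw [← Polynomial.map_comp, hcomp, map_X]
    have hdeg : (w.map mkp).natDegree = 1 := by
      have hnd := natDegree_comp (p := h.map mkp) (q := w.map mkp)
      rw [hmap, natDegree_X] at hnd
      exact (Nat.eq_one_of_mul_eq_one_left hnd.symm)
    constructor
    · intro hmem
      have hc0 : (w.map mkp).coeff 1 = 0 := by
        rw [coeff_map]
        exact Ideal.Quotient.eq_zero_iff_mem.mpr hmem
      have hne : w.map mkp ≠ 0 := fun h0 => by simp [h0] at hdeg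
      have hlc := mt leadingCoeff_eq_zero.mp hne
      rw [leadingCoeff, hdeg] at hlc
      exact hlc hc0
    · intro j hj
      have hcj : (w.map mkp).coeff j = 0 :=
        coeff_eq_zero_of_natDegree_lt (by omega)
      rw [coeff_map] at hcj
      exact Ideal.Quotient.eq_zero_iff_mem.mp hcj
  constructor
  · by_contra hnu
    obtain ⟨m, hm, hsub⟩ := Ideal.exists_le_maximal (Ideal.span {w.coeff 1})
      (by rw [Ne, Ideal.span_singleton_eq_top]; exact hnu)
    exact (key m hm.isPrime).1 (hsub (Ideal.subset_span rfl))
  · intro j hj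
    rw [← mem_nilradical, nilradical_eq_sInf, Submodule.mem_sInf]
    intro P hP
    exact (key P hP).2 j hj

lemma aeval_self_comp (p q : S[X]) : Polynomial.aeval q p = p.comp q := by
  rw [aeval_def, Polynomial.algebraMap_eq]; rfl

lemma exists_equiv_of_comp_eq_X {h w : S[X]} (hcomp : h.comp w = X) :
    ∃ e : S[X] ≃ₐ[S] S[X], e X = h := by
  obtain ⟨hu, hn⟩ := unit_nilpotent_of_comp_eq_X hcomp
  obtain ⟨e, he⟩ := exists_algEquiv_aeval hu hn
  refine ⟨e.symm, ?_⟩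
  rw [AlgEquiv.symm_apply_eq, he, aeval_self_comp, hcomp]

end RSaux

open MvPolynomial

/-- Russell–Sathaye theorem: `p₁·x + Q₁(y)` is a coordinate of `R[x,y]` iff the image of
`Q₁` in `(R/p₁)[y]` is a coordinate of `(R/p₁)[y]`. -/
theorem russell_sathaye (R : Type*) [CommRing R] (p₁ : R)
    (hp₁ : p₁ ∈ nonZeroDivisors R) (Q₁ : Polynomial R) :
    (∃ σ : MvPolynomial (Fin 2) R ≃ₐ[R] MvPolynomial (Fin 2) R,
        σ (X 1) = C p₁ * X 0 + Polynomial.aeval (X 1) Q₁) ↔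
      (∃ σ : Polynomial (R ⧸ Ideal.span {p₁}) ≃ₐ[R ⧸ Ideal.span {p₁}]
          Polynomial (R ⧸ Ideal.span {p₁}),
        σ Polynomial.X = Q₁.map (Ideal.Quotient.mk (Ideal.span {p₁}))) := by
  set I : Ideal R := Ideal.span {p₁} with hI
  set mk := Ideal.Quotient.mk I with hmk
  constructor
  · -- forward direction
    rintro ⟨σ, hσ⟩
    set χ : MvPolynomial (Fin 2) R →ₐ[R] Polynomial (R ⧸ I) :=
      MvPolynomial.aeval ![0, Polynomial.X] with hχ
    have hid : (X 1 : MvPolynomial (Fin 2) R)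
        = C p₁ * σ.symm (X 0) + Polynomial.aeval (σ.symm (X 1)) Q₁ := by
      have h0 := congrArg σ.symm hσ
      rw [AlgEquiv.symm_apply_apply] at h0
      conv_lhs => rw [h0]
      rw [map_add, map_mul]
      congr 1
      · congr 1
        rw [← MvPolynomial.algebraMap_eq, AlgEquiv.commutes]
      · exact (Polynomial.aeval_algHom_apply σ.symm (X 1) Q₁).symm
    have hχX1 : χ (X 1) = Polynomial.X := by simp [hχ]
    have hχC : χ (MvPolynomial.C p₁) = 0 := by
      rw [← MvPolynomial.algebraMap_eq, AlgHom.commutes,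
        IsScalarTower.algebraMap_apply R (R ⧸ I) (Polynomial (R ⧸ I)),
        Ideal.Quotient.algebraMap_eq, Polynomial.algebraMap_eq]
      have h1 : mk p₁ = 0 := Ideal.Quotient.eq_zero_iff_mem.mpr
        (Ideal.subset_span (Set.mem_singleton _))
      rw [← hmk, h1, map_zero]
    set w : Polynomial (R ⧸ I) := χ (σ.symm (X 1)) with hw
    have hXw : Polynomial.aeval w Q₁ = Polynomial.X := by
      have happ := congrArg χ hid
      rw [hχX1, map_add, map_mul, hχC, zero_mul, zero_add,
        ← Polynomial.aeval_algHom_apply χ (σ.symm (X 1)) Q₁, ← hw] at happ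
      exact happ.symm
    have hkey : (Q₁.map mk).comp w = Polynomial.X := by
      rw [← RSaux.aeval_self_comp, hmk, ← Ideal.Quotient.algebraMap_eq,
        Polynomial.aeval_map_algebraMap, hXw]
    exact RSaux.exists_equiv_of_comp_eq_X hkey
  · -- backward direction
    rintro ⟨σS, hσS⟩
    set Qb : Polynomial (R ⧸ I) := Q₁.map mk with hQb
    set Pb : Polynomial (R ⧸ I) := σS.symm Polynomial.X with hPb
    have hQP : Qb.comp Pb = Polynomial.X := by
      have h0 := congrArg σS.symm hσS
      rw [AlgEquiv.symm_apply_apply] at h0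
      have h1 : σS.symm Qb = Polynomial.aeval Pb Qb := by
        conv_lhs => rw [← Polynomial.aeval_X_left_apply Qb]
        exact (Polynomial.aeval_algHom_apply σS.symm Polynomial.X Qb).symm
      rw [← RSaux.aeval_self_comp, ← h1, ← h0]
    have hPQ : Pb.comp Qb = Polynomial.X := by
      have h0 : σS Pb = Polynomial.X := by rw [hPb, AlgEquiv.apply_symm_apply]
      have h1 : σS Pb = Polynomial.aeval Qb Pb := by
        conv_lhs => rw [← Polynomial.aeval_X_left_apply Pb]
        rw [← Polynomial.aeval_algHom_apply σS Polynomial.X Pb, hσS]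
      rw [← RSaux.aeval_self_comp, ← h1, h0]
    obtain ⟨P, hP⟩ := Polynomial.map_surjective mk Ideal.Quotient.mk_surjective Pb
    set μ : MvPolynomial (Fin 2) R →ₐ[R] MvPolynomial (Fin 2) (R ⧸ I) :=
      MvPolynomial.mapAlgHom (Ideal.Quotient.mkₐ R I) with hμ
    have hμC : μ (C p₁) = 0 := by
      have h1 : p₁ ∈ I := Ideal.subset_span (Set.mem_singleton _)
      rw [hμ, MvPolynomial.mapAlgHom_apply, MvPolynomial.map_C]
      simp [Ideal.Quotient.mkₐ_eq_mk, Ideal.Quotient.eq_zero_iff_mem, h1]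
    have hμX : ∀ i, μ (X i) = X i := by
      intro i
      rw [hμ, MvPolynomial.mapAlgHom_apply, MvPolynomial.map_X]
    have hker : ∀ z : MvPolynomial (Fin 2) R, μ z = 0 → ∃ g, z = C p₁ * g := by
      intro z hz
      have h1 : z ∈ RingHom.ker (MvPolynomial.mapAlgHom (σ := Fin 2) (Ideal.Quotient.mkₐ R I)) := by
        rw [RingHom.mem_ker, ← hμ]
        exact hz
      have hker2 : RingHom.ker (Ideal.Quotient.mkₐ R I) = I := by
        ext x
        simp [RingHom.mem_ker, Ideal.Quotient.mkₐ_eq_mk, Ideal.Quotient.eq_zero_iff_mem]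
      rw [MvPolynomial.ker_mapAlgHom, hker2, hI, Ideal.map_span,
        Set.image_singleton] at h1
      obtain ⟨g, hg⟩ := Ideal.mem_span_singleton.mp h1
      exact ⟨g, hg⟩
    have hbridge : ∀ (q : Polynomial R) (v : MvPolynomial (Fin 2) (R ⧸ I)),
        Polynomial.aeval v (q.map mk) = Polynomial.aeval v q := by
      intro q v
      rw [hmk, ← Ideal.Quotient.algebraMap_eq, Polynomial.aeval_map_algebraMap]
    have hμaeval : ∀ (q : Polynomial R) (v : MvPolynomial (Fin 2) R),
        μ (Polynomial.aeval v q) = Polynomial.aeval (μ v) q := fun q v =>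
      (Polynomial.aeval_algHom_apply μ v q).symm
    set F : MvPolynomial (Fin 2) R := C p₁ * X 0 + Polynomial.aeval (X 1) Q₁ with hF
    have hμF : μ F = Polynomial.aeval (X 1) Qb := by
      rw [hF, map_add, map_mul, hμC, zero_mul, zero_add, hμaeval, hμX, hQb, hbridge]
    obtain ⟨G, hG⟩ : ∃ g, Polynomial.aeval F P - X 1 = C p₁ * g := by
      apply hker
      rw [map_sub, hμaeval, hμF, hμX]
      have h2 : Polynomial.aeval (Polynomial.aeval (X 1 : MvPolynomial (Fin 2) (R ⧸ I)) Qb) P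
          = (X 1 : MvPolynomial (Fin 2) (R ⧸ I)) := by
        rw [← hbridge P, hP, ← Polynomial.aeval_comp, hPQ, Polynomial.aeval_X]
      rw [h2, sub_self]
    set F' : MvPolynomial (Fin 2) R := Polynomial.aeval (X 1) P - C p₁ * X 0 with hF'
    have hμF' : μ F' = Polynomial.aeval (X 1) Pb := by
      rw [hF', map_sub, map_mul, hμC, zero_mul, sub_zero, hμaeval, hμX, ← hP, hbridge]
    obtain ⟨G', hG'⟩ : ∃ g, X 1 - Polynomial.aeval F' Q₁ = C p₁ * g := by
      apply hker
      rw [map_sub, hμaeval, hμF', hμX]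
      have h2 : Polynomial.aeval (Polynomial.aeval (X 1 : MvPolynomial (Fin 2) (R ⧸ I)) Pb) Q₁
          = (X 1 : MvPolynomial (Fin 2) (R ⧸ I)) := by
        rw [← hbridge Q₁, ← hQb, ← Polynomial.aeval_comp, hQP, Polynomial.aeval_X]
      rw [h2, sub_self]
    set φ : MvPolynomial (Fin 2) R →ₐ[R] MvPolynomial (Fin 2) R :=
      MvPolynomial.aeval ![G, F] with hφ
    set ψ : MvPolynomial (Fin 2) R →ₐ[R] MvPolynomial (Fin 2) R :=
      MvPolynomial.aeval ![G', F'] with hψ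
    have hφ0 : φ (X 0) = G := by simp [hφ]
    have hφ1 : φ (X 1) = F := by simp [hφ]
    have hψ0 : ψ (X 0) = G' := by simp [hψ]
    have hψ1 : ψ (X 1) = F' := by simp [hψ]
    have hCp : ∀ (τ : MvPolynomial (Fin 2) R →ₐ[R] MvPolynomial (Fin 2) R),
        τ (MvPolynomial.C p₁) = MvPolynomial.C p₁ := by
      intro τ
      rw [← MvPolynomial.algebraMap_eq, AlgHom.commutes]
    have cancel : ∀ a b : MvPolynomial (Fin 2) R, C p₁ * a = C p₁ * b → a = b := by
      intro a b hab
      apply MvPolynomial.ext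
      intro d
      have h := congrArg (MvPolynomial.coeff d) hab
      rw [MvPolynomial.coeff_C_mul, MvPolynomial.coeff_C_mul] at h
      exact (mul_cancel_left_mem_nonZeroDivisors hp₁).mp h
    have hψF : ψ F = X 1 := by
      rw [hF, map_add, map_mul, hCp ψ, hψ0, ← Polynomial.aeval_algHom_apply ψ (X 1) Q₁, hψ1]
      linear_combination -hG'
    have hψG : ψ G = X 0 := by
      apply cancel
      calc MvPolynomial.C p₁ * ψ G = ψ (MvPolynomial.C p₁ * G) := by rw [map_mul, hCp ψ]
        _ = ψ (Polynomial.aeval F P - X 1) := by rw [hG]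
        _ = Polynomial.aeval (ψ F) P - ψ (X 1) := by
            rw [map_sub, ← Polynomial.aeval_algHom_apply ψ F P]
        _ = MvPolynomial.C p₁ * X 0 := by rw [hψF, hψ1, hF']; ring
    have hφF' : φ F' = X 1 := by
      rw [hF', map_sub, map_mul, hCp φ, hφ0, ← Polynomial.aeval_algHom_apply φ (X 1) P, hφ1]
      linear_combination hG
    have hφG' : φ G' = X 0 := by
      apply cancel
      calc MvPolynomial.C p₁ * φ G' = φ (MvPolynomial.C p₁ * G') := by rw [map_mul, hCp φ]
        _ = φ (X 1 - Polynomial.aeval F' Q₁) := by rw [hG']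
        _ = F - Polynomial.aeval (φ F') Q₁ := by
            rw [map_sub, ← Polynomial.aeval_algHom_apply φ F' Q₁, hφ1]
        _ = MvPolynomial.C p₁ * X 0 := by rw [hφF', hF]; ring
    have hcases : ∀ i : Fin 2, i = 0 ∨ i = 1 := by decide
    have h1 : φ.comp ψ = AlgHom.id R (MvPolynomial (Fin 2) R) := by
      apply MvPolynomial.algHom_ext
      intro i
      rcases hcases i with rfl | rfl
      · rw [AlgHom.coe_comp, Function.comp_apply, hψ0, hφG', AlgHom.id_apply]
      · rw [AlgHom.coe_comp, Function.comp_apply, hψ1, hφF', AlgHom.id_apply]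
    have h2 : ψ.comp φ = AlgHom.id R (MvPolynomial (Fin 2) R) := by
      apply MvPolynomial.algHom_ext
      intro i
      rcases hcases i with rfl | rfl
      · rw [AlgHom.coe_comp, Function.comp_apply, hφ0, hψG, AlgHom.id_apply]
      · rw [AlgHom.coe_comp, Function.comp_apply, hφ1, hψF, AlgHom.id_apply]
    refine ⟨AlgEquiv.ofAlgHom φ ψ h1 h2, ?_⟩
    show φ (X 1) = _
    rw [hφ1, hF]
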